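/- For every α > 0 and every z > 0, the modified Bessel function of the first kind satisfies 1 + α²/z² − (I_α'(z)/I_α(z))² > 0. -/

import Mathlib

lemma gammaFacPos (α : ℝ) (hα : 0 < α) (n : ℕ) :
    0 < (n.factorial : ℝ) * Real.Gamma ((n : ℝ) + α + 1) := by
  apply mul_pos (by exact_mod_cast n.factorial_pos)
  exact Real.Gamma_pos_of_pos (by positivity)

lemma sum2 (α b : ℝ) (hα : 0 < α) (hb : 0 < b) :
    Summable (fun n : ℕ => (2 * (n : ℝ) + α) ^ 2 * b ^ (2 * (n : ℝ) + α) /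
      ((n.factorial : ℝ) * Real.Gamma ((n : ℝ) + α + 1))) := by
  set f : ℕ → ℝ := fun n => (2 * (n : ℝ) + α) ^ 2 * b ^ (2 * (n : ℝ) + α) /
      ((n.factorial : ℝ) * Real.Gamma ((n : ℝ) + α + 1)) with hf
  have hfpos : ∀ n, 0 < f n := fun n => by
    apply div_pos _ (gammaFacPos α hα n)
    have h1 : (0:ℝ) < 2 * (n : ℝ) + α := by positivity
    positivity
  apply summable_of_ratio_norm_eventually_le (r := 1/2) (by norm_num)
  filter_upwards [Filter.eventually_ge_atTop (max 1 ⌈8 * b ^ 2⌉₊)] with n hn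
  have hn1 : 1 ≤ n := le_trans (le_max_left _ _) hn
  have hn2 : 8 * b ^ 2 ≤ (n : ℝ) + 1 := by
    have h := Nat.ceil_le.mp (le_trans (le_max_right _ _) hn)
    have : (1:ℝ) ≤ n := by exact_mod_cast hn1
    linarith
  rw [Real.norm_eq_abs, Real.norm_eq_abs, abs_of_pos (hfpos _), abs_of_pos (hfpos _)]
  -- rewrite f (n+1)
  have hfac : ((n+1).factorial : ℝ) = ((n:ℝ) + 1) * n.factorial := by
    rw [Nat.factorial_succ]; push_cast; ring
  have hGamma : Real.Gamma (((n+1 : ℕ) : ℝ) + α + 1) =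
      ((n:ℝ) + α + 1) * Real.Gamma ((n : ℝ) + α + 1) := by
    have h0 : ((n:ℝ) + α + 1) ≠ 0 := by positivity
    have : (((n+1 : ℕ) : ℝ) + α + 1) = ((n:ℝ) + α + 1) + 1 := by push_cast; ring
    rw [this, Real.Gamma_add_one h0]
  have hrpow : b ^ (2 * ((n+1 : ℕ) : ℝ) + α) = b ^ (2 * (n : ℝ) + α) * b ^ 2 := by
    have : (2 * ((n+1 : ℕ) : ℝ) + α) = (2 * (n : ℝ) + α) + (2:ℝ) := by push_cast; ring
    rw [this, Real.rpow_add hb, Real.rpow_two]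
  have key : f (n+1) = ((2 * (n:ℝ) + 2 + α)^2 * b ^ 2 / (((n:ℝ)+1) * ((n:ℝ) + α + 1) * (2 * (n:ℝ) + α)^2)) * f n := by
    rw [hf]
    simp only []
    rw [hfac, hGamma, hrpow]
    have h1 : (0:ℝ) < 2 * (n : ℝ) + α := by positivity
    have h2 := gammaFacPos α hα n
    have : (2 * ((n+1:ℕ):ℝ) + α) = 2 * (n:ℝ) + 2 + α := by push_cast; ring
    rw [this]
    field_simp
  rw [key]
  have h1 : (0:ℝ) < 2 * (n : ℝ) + α := by positivity
  have hratio : (2 * (n:ℝ) + 2 + α)^2 * b ^ 2 / (((n:ℝ)+1) * ((n:ℝ) + α + 1) * (2 * (n:ℝ) + α)^2) ≤ 1/2 := by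
    rw [div_le_iff₀ (by positivity)]
    have hp : 2 * (n:ℝ) + 2 + α ≤ 2 * (2 * (n:ℝ) + α) := by
      have : (1:ℝ) ≤ n := by exact_mod_cast hn1
      linarith
    have hsq : (2 * (n:ℝ) + 2 + α)^2 ≤ 4 * (2 * (n:ℝ) + α)^2 := by nlinarith
    have hA : (1:ℝ) ≤ (n:ℝ) + α + 1 := by
      have : (0:ℝ) ≤ n := Nat.cast_nonneg n
      linarith
    have e1 : (2 * (n:ℝ) + 2 + α)^2 * b^2 ≤ 4 * (2 * (n:ℝ) + α)^2 * b^2 :=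
      mul_le_mul_of_nonneg_right hsq (sq_nonneg b)
    have e2 : 4 * (2 * (n:ℝ) + α)^2 * b^2 ≤ ((n:ℝ)+1)/2 * (2 * (n:ℝ) + α)^2 := by
      nlinarith [sq_nonneg (2 * (n:ℝ) + α)]
    have e3 : ((n:ℝ)+1)/2 * (2 * (n:ℝ) + α)^2 ≤ 1/2 * (((n:ℝ)+1) * ((n:ℝ) + α + 1) * (2 * (n:ℝ) + α)^2) := by
      have h4 : (0:ℝ) ≤ ((n:ℝ)+1) * (2*(n:ℝ)+α)^2 * ((n:ℝ)+α) := by positivity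
      nlinarith [h4]
    linarith
  calc ((2 * (n:ℝ) + 2 + α)^2 * b ^ 2 / (((n:ℝ)+1) * ((n:ℝ) + α + 1) * (2 * (n:ℝ) + α)^2)) * f n
      ≤ (1/2) * f n := by
        apply mul_le_mul_of_nonneg_right hratio (le_of_lt (hfpos n))

/-- The modified Bessel function of the first kind,
`I_α(z) = ∑_{n≥0} (z/2)^{2n+α}/(n! Γ(n+α+1))`. -/
noncomputable def Ib (α z : ℝ) : ℝ :=
  ∑' n : ℕ, (z / 2) ^ (2 * (n : ℝ) + α) / ((n.factorial : ℝ) * Real.Gamma ((n : ℝ) + α + 1))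

/-- For every `α > 0` and `z > 0`, `1 + α²/z² − (I_α'(z)/I_α(z))² > 0`. -/
theorem stmt2 (α : ℝ) (hα : 0 < α) (z : ℝ) (hz : 0 < z) :
    0 < 1 + α ^ 2 / z ^ 2 - (deriv (Ib α) z / Ib α z) ^ 2 := by
  have hzz : (0:ℝ) < z / 2 := by linarith
  set u : ℕ → ℝ := fun n =>
    (z / 2) ^ (2 * (n : ℝ) + α) / ((n.factorial : ℝ) * Real.Gamma ((n : ℝ) + α + 1)) with hu
  have upos : ∀ n, 0 < u n := fun n =>
    div_pos (Real.rpow_pos_of_pos hzz _) (gammaFacPos α hα n)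
  have hIb : Ib α z = ∑' n, u n := rfl
  -- summability
  have hS2 : Summable (fun n : ℕ => (2 * (n : ℝ) + α) ^ 2 * u n) := by
    have h := sum2 α (z/2) hα hzz
    simpa [hu, mul_div_assoc] using h
  have hple : ∀ n : ℕ, (0:ℝ) < 2 * (n:ℝ) + α := fun n => by positivity
  have hS1 : Summable (fun n : ℕ => (2 * (n : ℝ) + α) * u n) := by
    apply Summable.of_nonneg_of_le (fun n => by positivity)
      (fun n => ?_) (hS2.mul_left (1/α))
    have h1 := hple n
    have h2 := (upos n).le
    have h3 : (0:ℝ) ≤ (n:ℝ) := Nat.cast_nonneg n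
    have key : α * ((2 * (n:ℝ) + α) * u n) ≤ (2 * (n:ℝ) + α)^2 * u n := by
      nlinarith [mul_nonneg (mul_nonneg h1.le h2) h3]
    calc (2 * (n:ℝ) + α) * u n = (1/α) * (α * ((2 * (n:ℝ) + α) * u n)) := by
          field_simp
      _ ≤ (1/α) * ((2 * (n:ℝ) + α)^2 * u n) :=
          mul_le_mul_of_nonneg_left key (by positivity)
  have hS0 : Summable u := by
    apply Summable.of_nonneg_of_le (fun n => (upos n).le)
      (fun n => ?_) (hS2.mul_left (1/α^2))
    have h1 := hple n
    have h2 := (upos n).le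
    have h3 : (0:ℝ) ≤ (n:ℝ) := Nat.cast_nonneg n
    have key : α^2 * u n ≤ (2 * (n:ℝ) + α)^2 * u n := by
      nlinarith [mul_nonneg (mul_nonneg h3 h3) h2, mul_nonneg (mul_nonneg h3 h2) hα.le]
    calc u n = (1/α^2) * (α^2 * u n) := by field_simp
      _ ≤ (1/α^2) * ((2 * (n:ℝ) + α)^2 * u n) :=
          mul_le_mul_of_nonneg_left key (by positivity)
  set S0 := ∑' n, u n with hS0d
  set S1 := ∑' n : ℕ, (2 * (n:ℝ) + α) * u n with hS1d
  set S2 := ∑' n : ℕ, (2 * (n:ℝ) + α)^2 * u n with hS2d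
  have S0pos : 0 < S0 := Summable.tsum_pos hS0 (fun n => (upos n).le) 0 (upos 0)
  -- basic rewriting lemmas for shifted terms
  have hfac : ∀ n : ℕ, (((n+1).factorial : ℕ) : ℝ) = ((n:ℝ) + 1) * n.factorial := by
    intro n; rw [Nat.factorial_succ]; push_cast; ring
  have hGamma : ∀ n : ℕ, Real.Gamma (((n+1 : ℕ) : ℝ) + α + 1) =
      ((n:ℝ) + α + 1) * Real.Gamma ((n : ℝ) + α + 1) := by
    intro n
    have h0 : ((n:ℝ) + α + 1) ≠ 0 := by positivity
    have he : (((n+1 : ℕ) : ℝ) + α + 1) = ((n:ℝ) + α + 1) + 1 := by push_cast; ring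
    rw [he, Real.Gamma_add_one h0]
  have hrpow : ∀ n : ℕ, (z/2) ^ (2 * ((n+1 : ℕ) : ℝ) + α) = (z/2) ^ (2 * (n : ℝ) + α) * (z/2) ^ 2 := by
    intro n
    have he : (2 * ((n+1 : ℕ) : ℝ) + α) = (2 * (n : ℝ) + α) + (2:ℝ) := by push_cast; ring
    rw [he, Real.rpow_add hzz, Real.rpow_two]
  -- the key identity S2 = (z^2 + α^2) * S0
  have hC : S2 = (z^2 + α^2) * S0 := by
    set g : ℕ → ℝ := fun n => (2 * (n:ℝ) + α)^2 * u n - α^2 * u n with hg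
    have hgsum : Summable g := hS2.sub (hS0.mul_left (α^2))
    have hg0 : g 0 = 0 := by simp [hg]
    have hgshift : ∀ n : ℕ, g (n+1) = z^2 * u n := by
      intro n
      have hG := gammaFacPos α hα n
      have hGn : ((n.factorial : ℝ) * Real.Gamma ((n : ℝ) + α + 1)) ≠ 0 := ne_of_gt hG
      have h1 : ((n:ℝ)+1) ≠ 0 := by positivity
      have h2 : ((n:ℝ) + α + 1) ≠ 0 := by positivity
      simp only [hg, hu]
      rw [hfac n, hGamma n, hrpow n]
      have hc : (2 * ((n+1:ℕ):ℝ) + α) = 2 * (n:ℝ) + 2 + α := by push_cast; ring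
      rw [hc]
      field_simp
      ring
    have e1 : (fun n : ℕ => (2 * (n:ℝ) + α)^2 * u n) = fun n => g n + α^2 * u n := by
      funext n; simp [hg]
    have e2 : S2 = (∑' n, g n) + α^2 * S0 := by
      rw [hS2d, e1, Summable.tsum_add hgsum (hS0.mul_left (α^2)), tsum_mul_left]
    have e3 : (∑' n, g n) = z^2 * S0 := by
      rw [Summable.tsum_eq_zero_add hgsum, hg0]
      simp only [hgshift]
      rw [tsum_mul_left, zero_add]
    rw [e2, e3]; ring
  -- derivative of Ib at z
  have hD : deriv (Ib α) z = S1 / z := by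
    set v : ℕ → ℝ → ℝ := fun n y =>
      (y / 2) ^ (2 * (n : ℝ) + α) / ((n.factorial : ℝ) * Real.Gamma ((n : ℝ) + α + 1)) with hv
    set v' : ℕ → ℝ → ℝ := fun n y =>
      (2 * (n : ℝ) + α) * (y / 2) ^ (2 * (n : ℝ) + α) / y /
        ((n.factorial : ℝ) * Real.Gamma ((n : ℝ) + α + 1)) with hv'
    set w : ℕ → ℝ := fun n =>
      (2/(z*α)) * ((2 * (n : ℝ) + α)^2 * ((z+1)/2) ^ (2 * (n : ℝ) + α) /
        ((n.factorial : ℝ) * Real.Gamma ((n : ℝ) + α + 1))) with hw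
    have hwsum : Summable w := (sum2 α ((z+1)/2) hα (by positivity)).mul_left _
    set s : Set ℝ := Set.Ioo (z/2) (z+1) with hs
    have hzs : z ∈ s := ⟨by linarith, by linarith⟩
    have hderiv : ∀ n : ℕ, ∀ y ∈ s, HasDerivAt (v n) (v' n y) y := by
      intro n y hy
      have hy0 : 0 < y := lt_trans hzz hy.1
      have hy2 : (0:ℝ) < y/2 := by linarith
      have h1 : HasDerivAt (fun x : ℝ => x / 2) (1/2 : ℝ) y := (hasDerivAt_id y).div_const 2
      have h2 : HasDerivAt (fun x : ℝ => x ^ (2 * (n : ℝ) + α)) 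
          ((2 * (n : ℝ) + α) * (y/2) ^ (2 * (n : ℝ) + α - 1)) (y/2) :=
        Real.hasDerivAt_rpow_const (Or.inl (ne_of_gt hy2))
      have h3 := (h2.comp y h1).div_const ((n.factorial : ℝ) * Real.Gamma ((n : ℝ) + α + 1))
      refine h3.congr_deriv ?_
      have h4 : (y/2) ^ (2 * (n : ℝ) + α - 1) = (y/2) ^ (2 * (n : ℝ) + α) / (y/2) := by
        rw [Real.rpow_sub hy2, Real.rpow_one]
      simp only [hv']
      rw [h4]
      field_simp
    have hbound : ∀ n : ℕ, ∀ y ∈ s, ‖v' n y‖ ≤ w n := by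
      intro n y hy
      have hy0 : 0 < y := lt_trans hzz hy.1
      have hG := gammaFacPos α hα n
      have hp := hple n
      have hv'pos : 0 ≤ v' n y := by
        apply div_nonneg _ hG.le
        apply div_nonneg _ hy0.le
        exact mul_nonneg hp.le (Real.rpow_pos_of_pos (by linarith) _).le
      rw [Real.norm_eq_abs, abs_of_nonneg hv'pos]
      have e1 : v' n y = (2 * (n : ℝ) + α) * (y / 2) ^ (2 * (n : ℝ) + α) /
          (y * ((n.factorial : ℝ) * Real.Gamma ((n : ℝ) + α + 1))) := by
        simp only [hv']; rw [div_div]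
      have e2 : w n = (2 * (n : ℝ) + α)^2 / α * ((z+1)/2) ^ (2 * (n : ℝ) + α) /
          ((z/2) * ((n.factorial : ℝ) * Real.Gamma ((n : ℝ) + α + 1))) := by
        simp only [hw]
        field_simp
      rw [e1, e2]
      apply div_le_div₀ (by positivity) _ (by positivity)
        (mul_le_mul_of_nonneg_right hy.1.le hG.le)
      apply mul_le_mul
      · rw [le_div_iff₀ hα]
        nlinarith [Nat.cast_nonneg (α := ℝ) n]
      · apply Real.rpow_le_rpow (by linarith) (by linarith [hy.2]) hp.le
      · exact (Real.rpow_pos_of_pos (by linarith) _).le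
      · positivity
    have hvz : Summable (fun n => v n z) := by
      have : (fun n => v n z) = u := rfl
      rw [this]; exact hS0
    have hDD := hasDerivAt_tsum_of_isPreconnected hwsum isOpen_Ioo
      (isPreconnected_Ioo) hderiv hbound hzs hvz hzs
    have hIbfun : (fun y => ∑' n : ℕ, v n y) = Ib α := rfl
    rw [hIbfun] at hDD
    have hval : ∑' n : ℕ, v' n z = S1 / z := by
      rw [hS1d, ← tsum_div_const]
      congr 1
      funext n
      simp only [hv', hu]
      ring
    rw [hDD.deriv, hval]
  -- strict Cauchy-Schwarz : S1^2 < S0 * S2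
  have hCS : S1^2 < S0 * S2 := by
    set lam : ℝ := S1 / S0 with hlam
    have hQe : (fun n : ℕ => u n * (2 * (n:ℝ) + α - lam)^2) = fun n : ℕ =>
        ((2 * (n:ℝ) + α)^2 * u n - (2*lam) * ((2 * (n:ℝ) + α) * u n)) + lam^2 * u n := by
      funext n; ring
    have hQsum : Summable (fun n : ℕ => u n * (2 * (n:ℝ) + α - lam)^2) := by
      rw [hQe]
      exact (hS2.sub (hS1.mul_left (2*lam))).add (hS0.mul_left (lam^2))
    have hQval : ∑' n : ℕ, u n * (2 * (n:ℝ) + α - lam)^2 = S2 - 2*lam*S1 + lam^2*S0 := by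
      rw [hQe, Summable.tsum_add (hS2.sub (hS1.mul_left (2*lam))) (hS0.mul_left (lam^2)),
        Summable.tsum_sub hS2 (hS1.mul_left (2*lam)), tsum_mul_left, tsum_mul_left]
    obtain ⟨n₀, hn₀⟩ : ∃ n₀ : ℕ, 2 * (n₀:ℝ) + α - lam ≠ 0 := by
      by_cases h : α - lam = 0
      · refine ⟨1, ?_⟩
        have : 2 * ((1:ℕ):ℝ) + α - lam = 2 := by push_cast; linarith
        rw [this]; norm_num
      · refine ⟨0, ?_⟩
        have : 2 * ((0:ℕ):ℝ) + α - lam = α - lam := by push_cast; ring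
        rw [this]; exact h
    have hQpos : 0 < ∑' n : ℕ, u n * (2 * (n:ℝ) + α - lam)^2 := by
      apply Summable.tsum_pos hQsum (fun n => by positivity) n₀
      have := upos n₀
      positivity
    rw [hQval] at hQpos
    have hl : lam * S0 = S1 := div_mul_cancel₀ _ (ne_of_gt S0pos)
    have h2 : 0 < S0 * (S2 - 2*lam*S1 + lam^2*S0) := mul_pos S0pos hQpos
    have h3 : S0 * (S2 - 2*lam*S1 + lam^2*S0) = S0*S2 - S1^2 := by
      calc S0 * (S2 - 2*lam*S1 + lam^2*S0) = S0*S2 - 2*(lam*S0)*S1 + (lam*S0)^2 := by ring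
        _ = S0*S2 - S1^2 := by rw [hl]; ring
    rw [h3] at h2
    linarith
  -- conclude
  rw [hD, hIb]
  have hkey : S1^2 < (z^2 + α^2) * S0^2 := by
    calc S1^2 < S0 * S2 := hCS
      _ = (z^2 + α^2) * S0^2 := by rw [hC]; ring
  have e : (S1 / z / S0)^2 = S1^2 / (z^2 * S0^2) := by
    rw [div_div, div_pow, mul_pow]
  rw [sub_pos, e, div_lt_iff₀ (by positivity)]
  have e2 : (1 + α^2/z^2) * (z^2 * S0^2) = (z^2 + α^2) * S0^2 := by
    field_simp
  rw [e2]
  exact hkey
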